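/- arXiv:1105.3713 — 2 statements merged into one kernel-verified Lean document; each statement's English description precedes it below -/
import Mathlib

section
/- For all nonnegative integers i ≥ j, m_{i,j} = Σ_{k=0}^{i−j} m_{i+1,j+1+k}·M_{k;ω}. -/
open scoped BigOperators

/-- Weighted count of Motzkin-type paths from (0,0) to (n,j): steps (1,1),(1,-1),(1,0),
horizontal steps weighted ω, staying weakly above the x-axis. -/
def motzkinM (ω : ℚ) : ℕ → ℤ → ℚ
  | 0, j => if j = 0 then 1 else 0
  | n+1, j => if j < 0 then 0 else
      motzkinM ω n (j-1) + ω * motzkinM ω n j + motzkinM ω n (j+1)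

/-- Inverse Motzkin matrix entries: m i j is the coefficient of t^i in
t^j * (1 + ω t + t^2)⁻¹ ^ (j+1). -/
noncomputable def minv (ω : ℚ) (i j : ℕ) : ℚ :=
  PowerSeries.coeff (R := ℚ) i ((PowerSeries.X : PowerSeries ℚ) ^ j *
    ((1 + PowerSeries.C (R := ℚ) ω * PowerSeries.X + PowerSeries.X ^ 2)⁻¹) ^ (j + 1))

section Aux
open PowerSeries Finset

noncomputable def MzQ (ω : ℚ) : PowerSeries ℚ := 1 + C (R := ℚ) ω * X + X ^ 2
noncomputable def Mzu (ω : ℚ) : PowerSeries ℚ := X * (MzQ ω)⁻¹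
noncomputable def MzS (ω : ℚ) (j : ℤ) : PowerSeries ℚ :=
  mk fun n => ∑ k ∈ range (n+1), motzkinM ω k j * coeff (R := ℚ) n (Mzu ω ^ k)
noncomputable def MzT (ω : ℚ) (j : ℤ) : PowerSeries ℚ :=
  if 0 ≤ j then X ^ j.toNat * MzQ ω else 0

lemma motzkinM_neg (ω : ℚ) (n : ℕ) {j : ℤ} (hj : j < 0) : motzkinM ω n j = 0 := by
  cases n with
  | zero => simp [motzkinM, hj.ne]
  | succ n => simp [motzkinM, hj]

lemma QinvQ (ω : ℚ) : MzQ ω * (MzQ ω)⁻¹ = 1 :=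
  PowerSeries.mul_inv_cancel _ (by simp [MzQ])

lemma coeff_u_pow (ω : ℚ) {m k : ℕ} (h : m < k) : coeff (R := ℚ) m (Mzu ω ^ k) = 0 := by
  rw [Mzu, mul_pow, coeff_mul]
  apply Finset.sum_eq_zero
  rintro ⟨p, q⟩ hpq
  rw [HasAntidiagonal.mem_antidiagonal] at hpq
  rw [coeff_X_pow, if_neg (by omega), zero_mul]

lemma coeff_S (ω : ℚ) (n : ℕ) (j : ℤ) {N : ℕ} (hN : n + 1 ≤ N) :
    coeff (R := ℚ) n (MzS ω j) = ∑ k ∈ range N, motzkinM ω k j * coeff (R := ℚ) n (Mzu ω ^ k) := by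
  rw [MzS, coeff_mk]
  apply Finset.sum_subset (Finset.range_subset_range.2 hN)
  intro k hk hk'
  rw [coeff_u_pow ω (by simp at hk hk' ⊢; omega), mul_zero]

lemma Teq (ω : ℚ) (j : ℤ) (hj : 0 ≤ j) :
    MzT ω j = (if j = 0 then 1 else 0)
      + Mzu ω * (MzT ω (j-1) + C (R := ℚ) ω * MzT ω j + MzT ω (j+1)) := by
  have hQ := QinvQ ω
  have hQdef : MzQ ω = 1 + C (R := ℚ) ω * X + X ^ 2 := rfl
  rcases eq_or_lt_of_le hj with hj0 | hj1
  · subst j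
    simp only [MzT, Mzu, if_pos (le_refl (0:ℤ)), zero_sub,
      if_neg (by norm_num : ¬ (0:ℤ) ≤ -1), if_pos (by norm_num : (0:ℤ) ≤ 0+1),
      Int.toNat_zero, pow_zero, one_mul, if_true, ite_true, eq_self_iff_true]
    have : ((0:ℤ)+1).toNat = 1 := by norm_num
    rw [this, pow_one]
    linear_combination (-(X*(C (R := ℚ) ω + X))) * hQ + hQdef
  · have hb : j.toNat = (j-1).toNat + 1 := by omega
    have hb2 : (j+1).toNat = (j-1).toNat + 2 := by omega
    simp only [MzT, if_pos hj, if_pos (by omega : (0:ℤ) ≤ j - 1),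
      if_pos (by omega : (0:ℤ) ≤ j + 1), if_neg (by omega : ¬ j = 0), Mzu]
    rw [hb, hb2]
    linear_combination (-(X^((j-1).toNat+1) * (1 + C (R := ℚ) ω * X + X^2))) * hQ
      + X^((j-1).toNat+1) * hQdef

lemma MzSeq (ω : ℚ) (j : ℤ) (hj : 0 ≤ j) :
    MzS ω j = (if j = 0 then 1 else 0)
      + Mzu ω * (MzS ω (j-1) + C (R := ℚ) ω * MzS ω j + MzS ω (j+1)) := by
  ext n
  rw [map_add, coeff_mul]
  have hW : ∀ q : ℕ, q ≤ n →
      coeff (R := ℚ) q (MzS ω (j-1) + C (R := ℚ) ω * MzS ω j + MzS ω (j+1))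
        = ∑ k ∈ range (n+1), motzkinM ω (k+1) j * coeff (R := ℚ) q (Mzu ω ^ k) := by
    intro q hq
    rw [map_add, map_add, coeff_C_mul, coeff_S ω q (j-1) (N := n+1) (by omega),
      coeff_S ω q j (N := n+1) (by omega), coeff_S ω q (j+1) (N := n+1) (by omega),
      Finset.mul_sum, ← Finset.sum_add_distrib, ← Finset.sum_add_distrib]
    refine Finset.sum_congr rfl fun k _ => ?_
    have hrec : motzkinM ω (k+1) j
        = motzkinM ω k (j-1) + ω * motzkinM ω k j + motzkinM ω k (j+1) := by
      rw [motzkinM, if_neg (by omega)]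
    rw [hrec]; ring
  have key : ∑ p ∈ antidiagonal n,
      coeff (R := ℚ) p.1 (Mzu ω) * coeff (R := ℚ) p.2 (MzS ω (j-1) + C (R := ℚ) ω * MzS ω j + MzS ω (j+1))
      = ∑ k ∈ range (n+1), motzkinM ω (k+1) j * coeff (R := ℚ) n (Mzu ω ^ (k+1)) := by
    have h1 : ∀ p ∈ antidiagonal n, coeff (R := ℚ) p.1 (Mzu ω) *
        coeff (R := ℚ) p.2 (MzS ω (j-1) + C (R := ℚ) ω * MzS ω j + MzS ω (j+1))
        = ∑ k ∈ range (n+1), motzkinM ω (k+1) j *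
            (coeff (R := ℚ) p.1 (Mzu ω) * coeff (R := ℚ) p.2 (Mzu ω ^ k)) := by
      rintro ⟨p, q⟩ hpq
      rw [HasAntidiagonal.mem_antidiagonal] at hpq
      rw [hW q (by omega), Finset.mul_sum]
      exact Finset.sum_congr rfl fun k _ => by ring
    rw [Finset.sum_congr rfl h1, Finset.sum_comm]
    refine Finset.sum_congr rfl fun k _ => ?_
    rw [← Finset.mul_sum, pow_succ', coeff_mul]
  rw [key, coeff_S ω n j (le_refl _), Finset.sum_range_succ' _ n,
    Finset.sum_range_succ _ n, coeff_u_pow ω (Nat.lt_succ_self n), mul_zero, add_zero]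
  have h0 : motzkinM ω 0 j = if j = 0 then 1 else 0 := by rw [motzkinM]
  have : coeff (R := ℚ) n ((if j = 0 then 1 else 0 : PowerSeries ℚ))
      = motzkinM ω 0 j * coeff (R := ℚ) n (Mzu ω ^ 0) := by
    rw [h0, pow_zero, coeff_one]
    split_ifs <;> simp_all
  rw [this]; ring

lemma S_eq_T (ω : ℚ) : ∀ n : ℕ, ∀ j : ℤ, coeff (R := ℚ) n (MzS ω j) = coeff (R := ℚ) n (MzT ω j) := by
  intro n
  induction n using Nat.strong_induction_on with
  | _ n ih =>
    intro j
    by_cases hj : 0 ≤ j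
    · have e : MzS ω j - MzT ω j
          = Mzu ω * ((MzS ω (j-1) - MzT ω (j-1)) + C (R := ℚ) ω * (MzS ω j - MzT ω j)
            + (MzS ω (j+1) - MzT ω (j+1))) := by
        linear_combination (MzSeq ω j hj) - (Teq ω j hj)
      have hz : coeff (R := ℚ) n (MzS ω j - MzT ω j) = 0 := by
        rw [e, coeff_mul]
        apply Finset.sum_eq_zero
        rintro ⟨p, q⟩ hpq
        rw [HasAntidiagonal.mem_antidiagonal] at hpq
        rcases Nat.eq_zero_or_pos p with hp | hp
        · subst hp
          have : coeff (R := ℚ) 0 (Mzu ω) = 0 := by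
            rw [Mzu, coeff_zero_eq_constantCoeff, map_mul, constantCoeff_X, zero_mul]
          rw [this, zero_mul]
        · have hq : q < n := by omega
          have h3 : coeff (R := ℚ) q ((MzS ω (j-1) - MzT ω (j-1)) + C (R := ℚ) ω * (MzS ω j - MzT ω j)
              + (MzS ω (j+1) - MzT ω (j+1))) = 0 := by
            rw [map_add, map_add, coeff_C_mul, map_sub, map_sub, map_sub,
              ih q hq (j-1), ih q hq j, ih q hq (j+1)]
            ring
          rw [h3, mul_zero]
      rw [map_sub, sub_eq_zero] at hz
      exact hz
    · push_neg at hj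
      rw [MzT, if_neg (not_le.2 hj), map_zero, MzS, coeff_mk]
      apply Finset.sum_eq_zero
      intro k _
      rw [motzkinM_neg ω k hj, zero_mul]

lemma coeff_Q_as_sum (ω : ℚ) (m N : ℕ) (hN : m + 1 ≤ N) :
    coeff (R := ℚ) m (MzQ ω) = ∑ k ∈ range N, motzkinM ω k 0 * coeff (R := ℚ) m (Mzu ω ^ k) := by
  have h1 := S_eq_T ω m 0
  rw [coeff_S ω m 0 (N := N) hN] at h1
  have h2 : MzT ω 0 = MzQ ω := by rw [MzT, if_pos le_rfl]; norm_num
  rw [h2] at h1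
  exact h1.symm

end Aux

theorem minv_from_motzkin (ω : ℚ) (i j : ℕ) (h : j ≤ i) :
    minv ω i j = ∑ k ∈ Finset.range (i - j + 1), minv ω (i+1) (j+1+k) * motzkinM ω k 0 := by
  classical
  open PowerSeries Finset in
  set Qi : PowerSeries ℚ := (MzQ ω)⁻¹ with hQi
  have hQQ : (1 + C (R := ℚ) ω * X + X ^ 2 : PowerSeries ℚ) = MzQ ω := rfl
  -- rewrite each summand
  have hterm : ∀ k, minv ω (i+1) (j+1+k) * motzkinM ω k 0
      = coeff (R := ℚ) (i+1) (C (R := ℚ) (motzkinM ω k 0) * ((X ^ (j+1) * Qi ^ (j+2)) * Mzu ω ^ k)) := by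
    intro k
    have hk : (X : PowerSeries ℚ) ^ (j+1+k) * Qi ^ ((j+1+k)+1)
        = (X ^ (j+1) * Qi ^ (j+2)) * (Mzu ω ^ k) := by
      rw [Mzu, mul_pow, show (j+1+k)+1 = (j+2)+k from by ring, pow_add, pow_add, ← hQi]
      ring
    rw [minv, hQQ, ← hQi, hk, coeff_C_mul, mul_comm]
  simp only [hterm]
  rw [← map_sum]
  have hsum : ∑ k ∈ range (i-j+1), C (R := ℚ) (motzkinM ω k 0) * ((X^(j+1)*Qi^(j+2)) * Mzu ω ^ k)
      = (X^(j+1) * Qi^(j+2)) * ∑ k ∈ range (i-j+1), C (R := ℚ) (motzkinM ω k 0) * Mzu ω ^ k := by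
    rw [Finset.mul_sum]; exact Finset.sum_congr rfl fun k _ => by ring
  rw [hsum]
  set P := ∑ k ∈ range (i-j+1), C (R := ℚ) (motzkinM ω k 0) * Mzu ω ^ k with hP
  have hQP : ∀ m : ℕ, m ≤ i - j → coeff (R := ℚ) m (MzQ ω - P) = 0 := by
    intro m hm
    rw [map_sub, coeff_Q_as_sum ω m (i-j+1) (by omega), hP, map_sum, sub_eq_zero]
    exact Finset.sum_congr rfl fun k _ => by rw [coeff_C_mul]
  have hmain : coeff (R := ℚ) (i+1) ((X^(j+1)*Qi^(j+2)) * P)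
      = coeff (R := ℚ) (i+1) ((X^(j+1)*Qi^(j+2)) * MzQ ω) := by
    have hd : coeff (R := ℚ) (i+1) ((X^(j+1) : PowerSeries ℚ) * (Qi^(j+2) * (MzQ ω - P))) = 0 := by
      have he : i + 1 = (i - j) + (j+1) := by omega
      rw [he, coeff_X_pow_mul, coeff_mul]
      apply Finset.sum_eq_zero
      rintro ⟨p, q⟩ hpq
      rw [HasAntidiagonal.mem_antidiagonal] at hpq
      rw [hQP q (by omega), mul_zero]
    have hz : coeff (R := ℚ) (i+1) ((X^(j+1)*Qi^(j+2)) * MzQ ω)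
        - coeff (R := ℚ) (i+1) ((X^(j+1)*Qi^(j+2)) * P) = 0 := by
      rw [← map_sub, show (X^(j+1)*Qi^(j+2)) * MzQ ω - (X^(j+1)*Qi^(j+2)) * P
        = (X^(j+1) : PowerSeries ℚ) * (Qi^(j+2) * (MzQ ω - P)) from by ring]
      exact hd
    linarith [hz]
  rw [hmain]
  have h4 : (X^(j+1) * Qi^(j+2)) * MzQ ω = X * (X^j * Qi^(j+1)) := by
    have h5 := QinvQ ω
    rw [hQi, pow_succ ((MzQ ω)⁻¹) (j+1), pow_succ X j]
    linear_combination (X^j * X * ((MzQ ω)⁻¹)^(j+1)) * h5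
  rw [h4, coeff_succ_X_mul, minv, hQQ, hQi]
end

section
/- For α, β and weight ω, det(α·M_{i+j;ω} + β·M_{i+j+1;ω})_{0≤i,j≤n−1} = Σ_{k=0}^{⌊n/2⌋} C(n−k,k)·(−1)^k·β^{2k}·(α+βω)^{n−2k}. -/
open scoped BigOperators

open Finset

lemma mz_neg (ω : ℚ) (n : ℕ) {j : ℤ} (h : j < 0) : motzkinM ω n j = 0 := by
  cases n with
  | zero => simp [motzkinM]; omega
  | succ n => simp [motzkinM, h]

lemma mz_rec (ω : ℚ) (n : ℕ) {j : ℤ} (h : 0 ≤ j) :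
    motzkinM ω (n+1) j = motzkinM ω n (j-1) + ω * motzkinM ω n j + motzkinM ω n (j+1) := by
  simp [motzkinM, not_lt.mpr h]

lemma mz_gt (ω : ℚ) : ∀ (n : ℕ) {j : ℤ}, (n : ℤ) < j → motzkinM ω n j = 0 := by
  intro n
  induction n with
  | zero => intro j h; simp [motzkinM]; omega
  | succ n ih =>
    intro j h
    rw [mz_rec ω n (by omega)]
    rw [ih (by push_cast; omega), ih (by push_cast; omega), ih (by push_cast; omega)]
    ring

lemma mz_diag (ω : ℚ) : ∀ (n : ℕ), motzkinM ω n n = 1 := by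
  intro n
  induction n with
  | zero => simp [motzkinM]
  | succ n ih =>
    rw [mz_rec ω n (by positivity)]
    push_cast
    rw [show ((n:ℤ)+1-1) = n by ring, ih, mz_gt ω n (by omega), mz_gt ω n (by omega)]
    ring

lemma mz_exchange (ω : ℚ) (m p M : ℕ) (hm : m ≤ M) (hp : p ≤ M) :
    ∑ k ∈ range (M+1), motzkinM ω (m+1) k * motzkinM ω p k
    = ∑ k ∈ range (M+1), motzkinM ω m k * motzkinM ω (p+1) k := by
  have expand : ∀ q r : ℕ, ∑ k ∈ range (M+1), motzkinM ω (q+1) k * motzkinM ω r k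
      = (∑ k ∈ range (M+1), motzkinM ω q ((k:ℤ)-1) * motzkinM ω r k)
        + ω * (∑ k ∈ range (M+1), motzkinM ω q k * motzkinM ω r k)
        + (∑ k ∈ range (M+1), motzkinM ω q ((k:ℤ)+1) * motzkinM ω r k) := by
    intro q r
    rw [Finset.mul_sum, ← Finset.sum_add_distrib, ← Finset.sum_add_distrib]
    refine Finset.sum_congr rfl fun k _ => ?_
    rw [mz_rec ω q (by positivity)]
    ring
  have expand' : ∀ q r : ℕ, ∑ k ∈ range (M+1), motzkinM ω q k * motzkinM ω (r+1) k
      = (∑ k ∈ range (M+1), motzkinM ω q k * motzkinM ω r ((k:ℤ)-1))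
        + ω * (∑ k ∈ range (M+1), motzkinM ω q k * motzkinM ω r k)
        + (∑ k ∈ range (M+1), motzkinM ω q k * motzkinM ω r ((k:ℤ)+1)) := by
    intro q r
    rw [Finset.mul_sum, ← Finset.sum_add_distrib, ← Finset.sum_add_distrib]
    refine Finset.sum_congr rfl fun k _ => ?_
    rw [mz_rec ω r (by positivity)]
    ring
  rw [expand, expand']
  have e1 : ∑ k ∈ range (M+1), motzkinM ω m ((k:ℤ)-1) * motzkinM ω p k
      = ∑ k ∈ range (M+1), motzkinM ω m k * motzkinM ω p ((k:ℤ)+1) := by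
    rw [Finset.sum_range_succ' (fun k => motzkinM ω m ((k:ℤ)-1) * motzkinM ω p k) M,
        Finset.sum_range_succ (fun k => motzkinM ω m k * motzkinM ω p ((k:ℤ)+1)) M]
    push_cast
    rw [mz_neg ω m (j := -1) (by norm_num), mz_gt ω p (j := (M:ℤ)+1) (by push_cast; omega)]
    rw [zero_mul, mul_zero, add_zero, add_zero]
    refine Finset.sum_congr rfl fun k _ => ?_
    rw [show (k:ℤ)+1-1 = (k:ℤ) by ring]
  have e2 : ∑ k ∈ range (M+1), motzkinM ω m ((k:ℤ)+1) * motzkinM ω p k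
      = ∑ k ∈ range (M+1), motzkinM ω m k * motzkinM ω p ((k:ℤ)-1) := by
    rw [Finset.sum_range_succ (fun k => motzkinM ω m ((k:ℤ)+1) * motzkinM ω p k) M,
        Finset.sum_range_succ' (fun k => motzkinM ω m k * motzkinM ω p ((k:ℤ)-1)) M]
    push_cast
    rw [mz_gt ω m (j := (M:ℤ)+1) (by push_cast; omega), mz_neg ω p (j := -1) (by norm_num)]
    rw [zero_mul, mul_zero, add_zero, add_zero]
    refine Finset.sum_congr rfl fun k _ => ?_
    rw [show (k:ℤ)+1-1 = (k:ℤ) by ring]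
  rw [e1, e2]
  ring

lemma mz_split (ω : ℚ) (p : ℕ) : ∀ (m M : ℕ), m + p ≤ M →
    motzkinM ω (m+p) 0 = ∑ k ∈ range (M+1), motzkinM ω m k * motzkinM ω p k := by
  induction p with
  | zero =>
    intro m M _
    rw [Finset.sum_eq_single 0]
    · simp [motzkinM]
    · intro k _ hk
      have : motzkinM ω 0 k = 0 := by
        simp [motzkinM]; exact_mod_cast hk
      simp [this]
    · simp
  | succ p ih =>
    intro m M hM
    have h1 : m + (p+1) = (m+1) + p := by omega
    rw [h1, ih (m+1) M (by omega), mz_exchange ω m p M (by omega) (by omega)]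

lemma mz_trunc (ω : ℚ) (m : ℕ) (g : ℕ → ℚ) {A B : ℕ} (hA : m < A) (hAB : A ≤ B) :
    ∑ k ∈ range B, motzkinM ω m k * g k = ∑ k ∈ range A, motzkinM ω m k * g k := by
  refine (Finset.sum_subset (Finset.range_subset_range.mpr hAB) fun k _ hk => ?_).symm
  rw [mz_gt ω m (by simp at hk; push_cast; omega), zero_mul]

lemma mz_split' (ω : ℚ) (m p N : ℕ) (hm : m < N) :
    motzkinM ω (m+p) 0 = ∑ k ∈ range N, motzkinM ω m k * motzkinM ω p k := by
  rw [mz_split ω p m (m+p) le_rfl]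
  rw [mz_trunc ω m (fun k => motzkinM ω p k) (Nat.lt_succ_self m) (by omega)]
  conv_rhs => rw [mz_trunc ω m (fun k => motzkinM ω p k) (Nat.lt_succ_self m) hm]

def triE (d b : ℚ) (n : ℕ) : Matrix (Fin n) (Fin n) ℚ :=
  Matrix.of fun i j => if (i:ℕ) = j then d else if (i:ℕ)+1 = j ∨ (j:ℕ)+1 = i then b else 0

lemma triE_det_rec (d b : ℚ) (n : ℕ) :
    (triE d b (n+2)).det = d * (triE d b (n+1)).det - b^2 * (triE d b n).det := by
  rw [Matrix.det_succ_row_zero]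
  rw [Fin.sum_univ_succ, Fin.sum_univ_succ]
  have hz : ∀ j : Fin n, (triE d b (n+2)) 0 j.succ.succ = 0 := by
    intro j
    simp only [triE, Matrix.of_apply, Fin.val_succ, Fin.val_zero]
    split_ifs <;> first | rfl | omega | simp_all | (simp_all; omega)
  have hsum0 : ∑ j : Fin n, (-1:ℚ) ^ ((j.succ.succ : Fin (n+2)) : ℕ) *
      (triE d b (n+2)) 0 j.succ.succ *
      ((triE d b (n+2)).submatrix Fin.succ j.succ.succ.succAbove).det = 0 := by
    apply Finset.sum_eq_zero
    intro j _
    rw [hz j, mul_zero, zero_mul]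
  rw [hsum0, add_zero]
  have h00 : (triE d b (n+2)) 0 0 = d := by simp [triE]
  have h01 : (triE d b (n+2)) 0 1 = b := by
    simp only [triE, Matrix.of_apply, Fin.val_zero, Fin.val_one]
    norm_num
  have hsub0 : (triE d b (n+2)).submatrix Fin.succ (Fin.succAbove 0) = triE d b (n+1) := by
    ext i j
    simp only [Matrix.submatrix_apply, Fin.succAbove_zero, triE, Matrix.of_apply, Fin.val_succ]
    split_ifs <;> first | rfl | omega | simp_all | (simp_all; omega)
  have hminor1 : ((triE d b (n+2)).submatrix Fin.succ (Fin.succAbove 1)).det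
      = b * (triE d b n).det := by
    set B := (triE d b (n+2)).submatrix Fin.succ (Fin.succAbove 1) with hB
    rw [Matrix.det_succ_column_zero, Fin.sum_univ_succ]
    have sa0 : (1 : Fin (n+2)).succAbove 0 = 0 := rfl
    have hB00 : B 0 0 = b := by
      simp only [hB, Matrix.submatrix_apply, sa0, triE, Matrix.of_apply, Fin.val_succ,
        Fin.val_zero]
      norm_num
    have hBz : ∀ i : Fin n, B i.succ 0 = 0 := by
      intro i
      simp only [hB, Matrix.submatrix_apply, sa0, triE, Matrix.of_apply, Fin.val_succ,
        Fin.val_zero]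
      split_ifs <;> first | rfl | omega | simp_all | (simp_all; omega)
    have hrest : ∑ i : Fin n, (-1:ℚ) ^ ((i.succ : Fin (n+1)) : ℕ) * B i.succ 0 *
        (B.submatrix i.succ.succAbove Fin.succ).det = 0 := by
      apply Finset.sum_eq_zero
      intro i _
      rw [hBz i, mul_zero, zero_mul]
    rw [hrest, add_zero, hB00]
    have hsub : B.submatrix (Fin.succAbove 0) Fin.succ = triE d b n := by
      ext i j
      simp only [hB, Matrix.submatrix_apply, Fin.succAbove_zero, triE, Matrix.of_apply,
        Fin.val_succ]
      have h1 : ((1 : Fin (n+2)).succAbove j.succ) = j.succ.succ := by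
        rw [Fin.succAbove_of_le_castSucc]
        simp [Fin.le_def]
      rw [h1]
      simp only [Fin.val_succ]
      split_ifs <;> first | rfl | omega | simp_all | (simp_all; omega)
    rw [hsub]
    simp
  rw [show (Fin.succ 0 : Fin (n+2)) = 1 from rfl] at *
  rw [h00, h01, hsub0, hminor1]
  simp [Fin.val_zero, Fin.val_one]
  ring

def fibP (d b : ℚ) (n : ℕ) : ℚ :=
  ∑ k ∈ range (n/2+1), ((n-k).choose k : ℚ) * (-1)^k * b^(2*k) * d^(n-2*k)

lemma fibP_rec (d b : ℚ) (n : ℕ) :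
    fibP d b (n+2) = d * fibP d b (n+1) - b^2 * fibP d b n := by
  have hrange : (n+2)/2+1 = n/2+2 := by omega
  have step1 : fibP d b (n+2) =
      (∑ k ∈ range (n/2+2), ((n+1-k).choose k : ℚ) * (-1)^k * b^(2*k) * d^(n+2-2*k))
      + ∑ k ∈ range (n/2+2), (if 1 ≤ k then ((n+1-k).choose (k-1) : ℚ) else 0)
          * (-1)^k * b^(2*k) * d^(n+2-2*k) := by
    rw [fibP, hrange, ← Finset.sum_add_distrib]
    refine Finset.sum_congr rfl fun k hk => ?_
    simp only [Finset.mem_range] at hk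
    match k with
    | 0 => norm_num
    | (k'+1) =>
      have h1 : n+2-(k'+1) = (n+1-(k'+1))+1 := by omega
      rw [h1, Nat.choose_succ_succ (n+1-(k'+1)) k']
      push_cast [Nat.succ_eq_add_one]
      ring
  have step2 : (∑ k ∈ range (n/2+2), ((n+1-k).choose k : ℚ) * (-1)^k * b^(2*k) * d^(n+2-2*k))
      = d * fibP d b (n+1) := by
    rw [fibP, Finset.mul_sum]
    rw [← Finset.sum_subset (Finset.range_subset_range.mpr (by omega : (n+1)/2+1 ≤ n/2+2))
      (fun k _ hk => ?_)]
    · refine Finset.sum_congr rfl fun k hk => ?_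
      simp only [Finset.mem_range] at hk
      have h2 : n+2-2*k = (n+1-2*k)+1 := by omega
      rw [h2, pow_succ]
      ring
    · simp only [Finset.mem_range] at hk
      have : (n+1-k).choose k = 0 := Nat.choose_eq_zero_of_lt (by omega)
      rw [this]
      norm_num
  have step3 : (∑ k ∈ range (n/2+2), (if 1 ≤ k then ((n+1-k).choose (k-1) : ℚ) else 0)
          * (-1)^k * b^(2*k) * d^(n+2-2*k)) = - (b^2 * fibP d b n) := by
    rw [Finset.sum_range_succ' (fun k => (if 1 ≤ k then ((n+1-k).choose (k-1) : ℚ) else 0)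
          * (-1)^k * b^(2*k) * d^(n+2-2*k)) (n/2+1)]
    simp only [Nat.le_zero, Nat.add_sub_cancel, if_pos (Nat.le_add_left 1 _)]
    norm_num
    rw [fibP, Finset.mul_sum, ← Finset.sum_neg_distrib]
    refine Finset.sum_congr rfl fun k hk => ?_
    simp only [Finset.mem_range] at hk
    have h3 : n+2-2*(k+1) = n-2*k := by omega
    have h4 : n+1-(k+1) = n-k := by omega
    have h5 : 2*(k+1) = 2*k+2 := by ring
    rw [h3, h4, h5, pow_add, pow_succ]
    ring
  rw [step1, step2, step3]
  ring

lemma triE_det (d b : ℚ) : ∀ n, (triE d b n).det = fibP d b n := by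
  intro n
  induction n using Nat.strong_induction_on with
  | _ n ih =>
    match n, ih with
    | 0, _ => simp [fibP, Matrix.det_fin_zero]
    | 1, _ =>
      rw [Matrix.det_fin_one]
      simp [triE, fibP]
    | (m+2), ih =>
      rw [triE_det_rec, ih (m+1) (by omega), ih m (by omega), fibP_rec]

theorem motzkin_shifted_hankel_det (ω α β : ℚ) (n : ℕ) :
    Matrix.det (Matrix.of fun i j : Fin n =>
        α * motzkinM ω (i.val + j.val) 0 + β * motzkinM ω (i.val + j.val + 1) 0) =
      ∑ k ∈ Finset.range (n/2 + 1),
        ((n-k).choose k : ℚ) * (-1) ^ k * β ^ (2*k) * (α + β * ω) ^ (n - 2*k) := by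
  set L : Matrix (Fin n) (Fin n) ℚ := Matrix.of fun i k => motzkinM ω i.val k.val with hL
  set E : Matrix (Fin n) (Fin n) ℚ := triE (α + β * ω) β n with hE
  have hEL : ∀ (k j : Fin n), (E * L.transpose) k j
      = α * motzkinM ω j.val k.val + β * motzkinM ω (j.val+1) k.val := by
    intro k j
    rw [Matrix.mul_apply]
    have hconv : ∑ m : Fin n, E k m * L.transpose m j
        = ∑ m ∈ range n, (if (k:ℕ) = m then (α + β * ω)
            else if (k:ℕ)+1 = m ∨ m+1 = (k:ℕ) then β else 0) * motzkinM ω j.val m := by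
      rw [← Fin.sum_univ_eq_sum_range (fun m => (if (k:ℕ) = m then (α + β * ω)
            else if (k:ℕ)+1 = m ∨ m+1 = (k:ℕ) then β else 0) * motzkinM ω j.val m) n]
      rfl
    rw [hconv]
    have hsplit : ∀ m : ℕ, (if (k:ℕ) = m then (α + β * ω)
            else if (k:ℕ)+1 = m ∨ m+1 = (k:ℕ) then β else 0) * motzkinM ω j.val m
        = (α + β * ω) * (if m = (k:ℕ) then motzkinM ω j.val m else 0)
          + β * (if m = (k:ℕ)+1 then motzkinM ω j.val m else 0)
          + β * (if m+1 = (k:ℕ) then motzkinM ω j.val m else 0) := by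
      intro m
      split_ifs with a b c d e f g h i
      all_goals try ring
      all_goals exfalso
      all_goals omega
    simp only [hsplit]
    rw [Finset.sum_add_distrib, Finset.sum_add_distrib, ← Finset.mul_sum, ← Finset.mul_sum,
      ← Finset.mul_sum]
    rw [Finset.sum_ite_eq' (range n) (k:ℕ) (fun m => motzkinM ω j.val m),
      Finset.sum_ite_eq' (range n) ((k:ℕ)+1) (fun m => motzkinM ω j.val m)]
    have t1 : (if (k:ℕ) ∈ range n then motzkinM ω j.val (k:ℕ) else 0) = motzkinM ω j.val k.val := by
      rw [if_pos (Finset.mem_range.mpr k.isLt)]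
    have t2 : (if (k:ℕ)+1 ∈ range n then motzkinM ω j.val ((((k:ℕ)+1 : ℕ)):ℤ) else 0)
        = motzkinM ω j.val ((k.val:ℤ)+1) := by
      by_cases h : (k:ℕ)+1 < n
      · rw [if_pos (Finset.mem_range.mpr h)]
        push_cast
        rfl
      · rw [if_neg (by simpa using h)]
        rw [mz_gt ω j.val (by push_cast; omega)]
    have t3 : (∑ m ∈ range n, if m+1 = (k:ℕ) then motzkinM ω j.val m else 0)
        = motzkinM ω j.val ((k.val:ℤ)-1) := by
      match hk : (k:ℕ) with
      | 0 =>
        rw [Finset.sum_eq_zero (fun m _ => by simp), mz_neg ω j.val (by norm_num)]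
      | (k0+1) =>
        have : ∀ m ∈ range n, (if m+1 = k0+1 then motzkinM ω j.val m else 0)
            = (if m = k0 then motzkinM ω j.val m else 0) := by
          intro m _
          simp [Nat.add_right_cancel_iff]
        rw [Finset.sum_congr rfl this,
          Finset.sum_ite_eq' (range n) k0 (fun m => motzkinM ω j.val m),
          if_pos (Finset.mem_range.mpr (by have := k.isLt; omega))]
        congr 1
        push_cast
        ring
    rw [t1, t2, t3, mz_rec ω j.val (by positivity)]
    push_cast
    ring
  have hA : (Matrix.of fun i j : Fin n =>
        α * motzkinM ω (i.val + j.val) 0 + β * motzkinM ω (i.val + j.val + 1) 0)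
      = L * (E * L.transpose) := by
    ext i j
    rw [Matrix.mul_apply]
    simp only [hEL]
    have hconv : ∑ k : Fin n, L i k * (α * motzkinM ω j.val k.val + β * motzkinM ω (j.val+1) k.val)
        = ∑ k ∈ range n, motzkinM ω i.val k * (α * motzkinM ω j.val k + β * motzkinM ω (j.val+1) k) := by
      rw [← Fin.sum_univ_eq_sum_range (fun k => motzkinM ω i.val k *
        (α * motzkinM ω j.val k + β * motzkinM ω (j.val+1) k)) n]
      rfl
    rw [hconv]
    have e1 : ∑ k ∈ range n, motzkinM ω i.val k * (α * motzkinM ω j.val k + β * motzkinM ω (j.val+1) k)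
        = α * (∑ k ∈ range n, motzkinM ω i.val k * motzkinM ω j.val k)
          + β * (∑ k ∈ range n, motzkinM ω i.val k * motzkinM ω (j.val+1) k) := by
      rw [Finset.mul_sum, Finset.mul_sum, ← Finset.sum_add_distrib]
      exact Finset.sum_congr rfl fun k _ => by ring
    rw [Matrix.of_apply, e1, ← mz_split' ω i.val j.val n i.isLt,
      ← mz_split' ω i.val (j.val+1) n i.isLt]
    rw [show i.val + (j.val + 1) = i.val + j.val + 1 by omega]
  rw [hA, ← Matrix.mul_assoc, Matrix.det_mul, Matrix.det_mul, Matrix.det_transpose]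
  have hdetL : L.det = 1 := by
    rw [Matrix.det_of_lowerTriangular L (fun i j hij => ?_)]
    · rw [Finset.prod_eq_one]
      intro i _
      exact mz_diag ω i.val
    · exact mz_gt ω i.val (by exact_mod_cast (by simpa using hij : i.val < j.val))
  rw [hdetL, hE, triE_det (α + β * ω) β n, fibP]
  rw [one_mul, mul_one]
end
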